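/- Let ABC be a nondegenerate triangle in the Euclidean plane with no right angle, with circumcenter O, circumradius R, and nine-point center N = midpoint(O, orthocenter). Define the poles A' = inversion O R (midpoint(B,C)), B' = inversion O R (midpoint(C,A)), C' = inversion O R (midpoint(A,B)). Then the image of the Euler circle under inversion in the circumcircle is a circle through the three poles: there exist a point N' and a real R' > 0 such that the image of {X : dist(N,X) = R/2} under inversion O R equals {X : dist(N',X) = R'}, and A', B', C' all lie on this circle. -/

import Mathlib

open EuclideanGeometry Real RealInnerProductSpace

section Aux

variable {E : Type*} [NormedAddCommGroup E] [InnerProductSpace ℝ E]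

private lemma dist_inv_sq (c n x : E) (R r k : ℝ)
    (hk : k * (dist c n ^ 2 - r ^ 2) = R ^ 2) (hx : x ≠ c) :
    dist (k • (n - c) + c) (inversion c R x) ^ 2 - (|k| * r) ^ 2
      = (k * R ^ 2 / dist x c ^ 2) * (dist n x ^ 2 - r ^ 2) := by
  have hu' : ‖x - c‖ ≠ 0 := by rwa [← dist_eq_norm, dist_ne_zero]
  have hxc : dist x c = ‖x - c‖ := dist_eq_norm _ _
  have hnx : dist n x ^ 2 = ‖n - c‖ ^ 2 - 2 * ⟪n - c, x - c⟫ + ‖x - c‖ ^ 2 := by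
    rw [dist_eq_norm, show n - x = (n - c) - (x - c) by abel, norm_sub_sq_real]
  have hd : dist (k • (n - c) + c) (inversion c R x)
      = ‖k • (n - c) - (R / ‖x - c‖) ^ 2 • (x - c)‖ := by
    rw [inversion, vsub_eq_sub, vadd_eq_add, dist_eq_norm, hxc]
    congr 1
    abel
  have hcn : dist c n = ‖n - c‖ := by rw [dist_comm, dist_eq_norm]
  rw [hcn] at hk
  rw [hd, norm_sub_sq_real, inner_smul_left, inner_smul_right, norm_smul, norm_smul,
    hnx, hxc]
  simp only [conj_trivial, Real.norm_eq_abs, norm_pow]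
  set d := ‖n - c‖
  set u := ‖x - c‖
  set ip : ℝ := ⟪n - c, x - c⟫
  simp only [sq_abs]
  field_simp
  simp only [mul_pow, sq_abs]
  linear_combination (k * u^2 - R^2) * hk

private lemma inversion_sphere (c n : E) {R r : ℝ} (hR : R ≠ 0) (hr : 0 < r)
    (hd : dist c n ≠ r) :
    ∃ n' r', 0 < r' ∧ inversion c R '' {x | dist n x = r} = {x | dist n' x = r'} ∧
      ∀ x, dist n x = r → dist n' (inversion c R x) = r' := by
  have hD : dist c n ^ 2 - r ^ 2 ≠ 0 :=
    sub_ne_zero.2 fun h => hd ((sq_eq_sq₀ dist_nonneg hr.le).mp h)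
  set k : ℝ := R ^ 2 / (dist c n ^ 2 - r ^ 2) with hkdef
  have hk : k * (dist c n ^ 2 - r ^ 2) = R ^ 2 := div_mul_cancel₀ _ hD
  have hk0 : k ≠ 0 := by
    intro h
    rw [h, zero_mul] at hk
    exact hR (pow_eq_zero_iff (by norm_num) |>.mp hk.symm)
  have hkr : (0:ℝ) < |k| * r := mul_pos (abs_pos.2 hk0) hr
  have main : ∀ x, x ≠ c →
      (dist n x = r ↔ dist (k • (n - c) + c) (inversion c R x) = |k| * r) := by
    intro x hx
    have h2 := dist_inv_sq c n x R r k hk hx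
    have hco : k * R ^ 2 / dist x c ^ 2 ≠ 0 :=
      div_ne_zero (mul_ne_zero hk0 (pow_ne_zero 2 hR)) (pow_ne_zero 2 (dist_ne_zero.2 hx))
    constructor
    · intro h
      rw [h, sub_self, mul_zero, sub_eq_zero] at h2
      exact (sq_eq_sq₀ dist_nonneg hkr.le).mp h2
    · intro h
      rw [h, sub_self] at h2
      have h3 : dist n x ^ 2 - r ^ 2 = 0 := by
        rcases mul_eq_zero.mp h2.symm with h4 | h4
        · exact absurd h4 hco
        · exact h4
      exact (sq_eq_sq₀ dist_nonneg hr.le).mp (by linarith)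
  have hcS : ∀ x, dist n x = r → x ≠ c := by
    rintro x hx rfl
    exact hd (by rwa [dist_comm])
  have hcn' : dist (k • (n - c) + c) c = |k| * dist c n := by
    rw [dist_eq_norm, add_sub_cancel_right, norm_smul, Real.norm_eq_abs,
      dist_comm, dist_eq_norm]
  refine ⟨k • (n - c) + c, |k| * r, hkr, ?_, fun x hx => (main x (hcS x hx)).mp hx⟩
  ext y
  simp only [Set.mem_image, Set.mem_setOf_eq]
  constructor
  · rintro ⟨x, hxS, rfl⟩
    exact (main x (hcS x hxS)).mp hxS
  · intro hy
    have hyc : y ≠ c := by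
      rintro rfl
      rw [hcn'] at hy
      exact hd (mul_left_cancel₀ (abs_ne_zero.2 hk0) hy)
    have hyc' : inversion c R y ≠ c := by
      rw [← dist_ne_zero, dist_inversion_center]
      exact div_ne_zero (pow_ne_zero 2 hR) (dist_ne_zero.2 hyc)
    exact ⟨inversion c R y, (main _ hyc').mpr (by rwa [inversion_inversion c hR]),
      inversion_inversion c hR y⟩

private lemma gram2 (a b c : EuclideanSpace ℝ (Fin 2)) :
    ⟪a,a⟫ * ⟪b,b⟫ * ⟪c,c⟫ + 2 * ⟪a,b⟫ * ⟪b,c⟫ * ⟪a,c⟫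
      = ⟪a,a⟫ * ⟪b,c⟫^2 + ⟪b,b⟫ * ⟪a,c⟫^2 + ⟪c,c⟫ * ⟪a,b⟫^2 := by
  simp only [PiLp.inner_apply, RCLike.inner_apply, conj_trivial, Fin.sum_univ_two]
  ring

private lemma neg_of_inner (vb vc : E) (R : ℝ) (hb : ‖vb‖ = R) (hc : ‖vc‖ = R)
    (hx : R ^ 2 + ⟪vb, vc⟫ = 0) : vc = -vb := by
  have h0 : ⟪vb + vc, vb + vc⟫ = 0 := by
    simp only [inner_add_left, inner_add_right, real_inner_self_eq_norm_sq, hb, hc,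
      real_inner_comm vb vc]
    linarith
  have := inner_self_eq_zero.mp h0
  linear_combination (norm := abel) this

private lemma inner_vsub_eq_zero (vb va : E) (R : ℝ) (ha : ‖va‖ = R) (hb : ‖vb‖ = R) :
    ⟪vb - va, -vb - va⟫ = 0 := by
  simp only [inner_sub_left, inner_sub_right, inner_neg_right,
    real_inner_self_eq_norm_sq, ha, hb, real_inner_comm va vb]
  ring

end Aux

/-- For a nondegenerate triangle with no right angle, the image of its Euler circle under
inversion in its circumcircle is a circle passing through the three poles of the sides,
i.e. through the inverses of the three side midpoints. -/
theorem inverse_of_euler_circle_passes_through_poles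
    (A B C : EuclideanSpace ℝ (Fin 2)) (h : AffineIndependent ℝ ![A, B, C])
    (hA : ∠ B A C ≠ π / 2) (hB : ∠ A B C ≠ π / 2) (hC : ∠ B C A ≠ π / 2)
    (T : Affine.Triangle ℝ (EuclideanSpace ℝ (Fin 2))) (hT : T = ⟨![A, B, C], h⟩)
    (O N : EuclideanSpace ℝ (Fin 2)) (R : ℝ)
    (hO : O = T.circumcenter) (hR : R = T.circumradius)
    (hN : N = midpoint ℝ O T.orthocenter)
    (A' B' C' : EuclideanSpace ℝ (Fin 2))
    (hA' : A' = EuclideanGeometry.inversion O R (midpoint ℝ B C))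
    (hB' : B' = EuclideanGeometry.inversion O R (midpoint ℝ C A))
    (hC' : C' = EuclideanGeometry.inversion O R (midpoint ℝ A B)) :
    ∃ (N' : EuclideanSpace ℝ (Fin 2)) (R' : ℝ), 0 < R' ∧
      EuclideanGeometry.inversion O R '' {X | dist N X = R / 2} = {X | dist N' X = R'} ∧
      dist N' A' = R' ∧ dist N' B' = R' ∧ dist N' C' = R' := by
  have hPA : T.points 0 = A := by rw [hT]; rfl
  have hPB : T.points 1 = B := by rw [hT]; rfl
  have hPC : T.points 2 = C := by rw [hT]; rfl
  have hRpos : 0 < R := by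
    rw [hR]; exact T.circumradius_pos
  have hdA : dist A O = R := by
    rw [hO, hR, ← hPA]; exact T.dist_circumcenter_eq_circumradius 0
  have hdB : dist B O = R := by
    rw [hO, hR, ← hPB]; exact T.dist_circumcenter_eq_circumradius 1
  have hdC : dist C O = R := by
    rw [hO, hR, ← hPC]; exact T.dist_circumcenter_eq_circumradius 2
  have hnA : ‖A - O‖ = R := by rw [← dist_eq_norm]; exact hdA
  have hnB : ‖B - O‖ = R := by rw [← dist_eq_norm]; exact hdB
  have hnC : ‖C - O‖ = R := by rw [← dist_eq_norm]; exact hdC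
  -- orthocenter in terms of A B C O
  have hcent : (Finset.univ : Finset (Fin 3)).centroid ℝ T.points
      = (3:ℝ)⁻¹ • (A + B + C) := by
    rw [Finset.centroid_def,
      Finset.affineCombination_eq_linear_combination _ _ _
        (Finset.sum_centroidWeights_eq_one_of_nonempty ℝ _ ⟨0, Finset.mem_univ 0⟩)]
    simp [Finset.centroidWeights_apply, Fin.sum_univ_three, hPA, hPB, hPC, smul_add]
  have hH : T.orthocenter = (3:ℝ) • ((3:ℝ)⁻¹ • (A + B + C) - O) + O := by
    rw [T.orthocenter_eq_smul_vsub_vadd_circumcenter, vsub_eq_sub, vadd_eq_add, hcent, ← hO]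
  have hNO : N - O = (2:ℝ)⁻¹ • ((A - O) + (B - O) + (C - O)) := by
    rw [hN, hH, midpoint_eq_smul_add, invOf_eq_inv (2:ℝ)]
    match_scalars <;> norm_num
  -- the side midpoints lie on the Euler circle
  have hmids : ∀ X Y Z : EuclideanSpace ℝ (Fin 2), ‖X - O‖ = R →
      N - midpoint ℝ Y Z = (2:ℝ)⁻¹ • (X - O) → dist N (midpoint ℝ Y Z) = R / 2 := by
    intro X Y Z hX hsub
    rw [dist_eq_norm, hsub, norm_smul, Real.norm_eq_abs, hX,
      abs_of_pos (by norm_num : (0:ℝ) < (2:ℝ)⁻¹)]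
    ring
  have hN' : N = (2:ℝ)⁻¹ • ((A - O) + (B - O) + (C - O)) + O := by
    rw [← hNO]; abel
  have hsubA : N - midpoint ℝ B C = (2:ℝ)⁻¹ • (A - O) := by
    rw [hN', midpoint_eq_smul_add, invOf_eq_inv (2:ℝ)]
    match_scalars <;> norm_num
  have hsubB : N - midpoint ℝ C A = (2:ℝ)⁻¹ • (B - O) := by
    rw [hN', midpoint_eq_smul_add, invOf_eq_inv (2:ℝ)]
    match_scalars <;> norm_num
  have hsubC : N - midpoint ℝ A B = (2:ℝ)⁻¹ • (C - O) := by
    rw [hN', midpoint_eq_smul_add, invOf_eq_inv (2:ℝ)]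
    match_scalars <;> norm_num
  have hmidA : dist N (midpoint ℝ B C) = R / 2 := hmids A B C hnA hsubA
  have hmidB : dist N (midpoint ℝ C A) = R / 2 := hmids B C A hnB hsubB
  have hmidC : dist N (midpoint ℝ A B) = R / 2 := hmids C A B hnC hsubC
  -- O is not on the Euler circle (no right angle)
  have hd : dist O N ≠ R / 2 := by
    intro hcon
    have h0 : ‖(A - O) + (B - O) + (C - O)‖ = R := by
      have h1 : dist O N = (2:ℝ)⁻¹ * ‖(A - O) + (B - O) + (C - O)‖ := by
        rw [dist_comm, dist_eq_norm, hNO, norm_smul, Real.norm_eq_abs]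
        norm_num
      rw [h1] at hcon
      linarith
    have hsq : ⟪(A-O) + (B-O) + (C-O), (A-O) + (B-O) + (C-O)⟫ = R ^ 2 := by
      rw [real_inner_self_eq_norm_sq, h0]
    have c1 := real_inner_comm (A-O) (B-O)
    have c2 := real_inner_comm (A-O) (C-O)
    have c3 := real_inner_comm (B-O) (C-O)
    have hsum : ⟪(A-O),(B-O)⟫ + ⟪(A-O),(C-O)⟫ + ⟪(B-O),(C-O)⟫ = -(R^2) := by
      simp only [inner_add_left, inner_add_right, real_inner_self_eq_norm_sq,
        hnA, hnB, hnC] at hsq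
      linarith
    have hg := gram2 (A-O) (B-O) (C-O)
    rw [real_inner_self_eq_norm_sq, real_inner_self_eq_norm_sq, real_inner_self_eq_norm_sq,
      hnA, hnB, hnC] at hg
    have hprod : (R^2 + ⟪(B-O),(C-O)⟫) * (R^2 + ⟪(A-O),(C-O)⟫)
        * (R^2 + ⟪(A-O),(B-O)⟫) = 0 := by
      set x : ℝ := ⟪(B-O),(C-O)⟫
      set y : ℝ := ⟪(A-O),(C-O)⟫
      set z : ℝ := ⟪(A-O),(B-O)⟫
      linear_combination (1/2) * hg + (R^2/2 * (x + y + z + R^2)) * hsum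
    rcases mul_eq_zero.mp hprod with h5 | h5
    rcases mul_eq_zero.mp h5 with h6 | h6
    · -- right angle at A
      have hneg : (C - O) = -(B - O) := neg_of_inner _ _ R hnB hnC (by linarith)
      apply hA
      rw [EuclideanGeometry.angle, ← InnerProductGeometry.inner_eq_zero_iff_angle_eq_pi_div_two]
      have e1 : B -ᵥ A = (B - O) - (A - O) := by rw [vsub_eq_sub]; abel
      have e2 : C -ᵥ A = (C - O) - (A - O) := by rw [vsub_eq_sub]; abel
      rw [e1, e2, hneg]
      exact inner_vsub_eq_zero (B - O) (A - O) R hnA hnB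
    · -- right angle at B
      have hneg : (C - O) = -(A - O) := neg_of_inner _ _ R hnA hnC (by linarith)
      apply hB
      rw [EuclideanGeometry.angle, ← InnerProductGeometry.inner_eq_zero_iff_angle_eq_pi_div_two]
      have e1 : A -ᵥ B = (A - O) - (B - O) := by rw [vsub_eq_sub]; abel
      have e2 : C -ᵥ B = (C - O) - (B - O) := by rw [vsub_eq_sub]; abel
      rw [e1, e2, hneg]
      exact inner_vsub_eq_zero (A - O) (B - O) R hnB hnA
    · -- right angle at C
      have hneg : (B - O) = -(A - O) := neg_of_inner _ _ R hnA hnB (by linarith)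
      apply hC
      rw [EuclideanGeometry.angle, ← InnerProductGeometry.inner_eq_zero_iff_angle_eq_pi_div_two]
      have e1 : B -ᵥ C = (B - O) - (C - O) := by rw [vsub_eq_sub]; abel
      have e2 : A -ᵥ C = (A - O) - (C - O) := by rw [vsub_eq_sub]; abel
      rw [e1, e2, hneg, real_inner_comm]
      exact inner_vsub_eq_zero (A - O) (C - O) R hnC hnA
  obtain ⟨N', R', hpos, himg, hmem⟩ :=
    inversion_sphere O N (ne_of_gt hRpos) (by linarith : (0:ℝ) < R / 2) hd
  exact ⟨N', R', hpos, himg,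
    by rw [hA']; exact hmem _ hmidA,
    by rw [hB']; exact hmem _ hmidB,
    by rw [hC']; exact hmem _ hmidC⟩
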